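/- arXiv:2412.13990 — 2 statements merged into one kernel-verified Lean document; each statement's English description precedes it below -/
import Mathlib

section
/- (Gradient-gap inequality) Let C be a nonzero real n×n matrix and let s(C) denote the sum of the singular values of C. Then for every X ∈ O(n): s(C) − Tr(C X) ≥ (1/(2·σmax(C))) · ‖skew(Xᵀ Cᵀ)‖_F². -/
open Matrix

noncomputable section

/-- Matrix exponential of a real square matrix. -/
def mexp {n : ℕ} (A : Matrix (Fin n) (Fin n) ℝ) : Matrix (Fin n) (Fin n) ℝ :=
  NormedSpace.exp A

/-- Skew-symmetric part: `skew M = (M - Mᵀ)/2`. -/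
def skewPart {n : ℕ} (M : Matrix (Fin n) (Fin n) ℝ) : Matrix (Fin n) (Fin n) ℝ :=
  (1 / 2 : ℝ) • (M - Mᵀ)

/-- Frobenius norm of a real square matrix. -/
def frobNorm {n : ℕ} (A : Matrix (Fin n) (Fin n) ℝ) : ℝ :=
  Real.sqrt (∑ i, ∑ j, (A i j) ^ 2)

/-- The singular values of `A`: square roots of the eigenvalues of `AᴴA = AᵀA`. -/
def singVals {n : ℕ} (A : Matrix (Fin n) (Fin n) ℝ) : Fin n → ℝ :=
  fun i => Real.sqrt ((Matrix.isHermitian_conjTranspose_mul_self A).eigenvalues i)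

/-- Largest singular value of `A`. -/
def sigmaMax {n : ℕ} (A : Matrix (Fin n) (Fin n) ℝ) : ℝ := ⨆ i, singVals A i

/-- Smallest singular value of `A`. -/
def sigmaMin {n : ℕ} (A : Matrix (Fin n) (Fin n) ℝ) : ℝ := ⨅ i, singVals A i

/-- Spectral norm (largest singular value) of `A`. -/
def specNorm {n : ℕ} (A : Matrix (Fin n) (Fin n) ℝ) : ℝ := sigmaMax A

/-- Riemannian distance on a connected component of `O(n)`:
`dist(X,Y) = min { ‖Ω‖_F : Ω skew-symmetric, X·exp(Ω) = Y }`. -/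
def Odist {n : ℕ} (X Y : Matrix (Fin n) (Fin n) ℝ) : ℝ :=
  sInf {d : ℝ | ∃ Ω : Matrix (Fin n) (Fin n) ℝ, Ωᵀ = -Ω ∧ X * mexp Ω = Y ∧ d = frobNorm Ω}


lemma exists_svd {n : ℕ} (C : Matrix (Fin n) (Fin n) ℝ) :
    ∃ U V : Matrix (Fin n) (Fin n) ℝ,
      Uᵀ * U = 1 ∧ U * Uᵀ = 1 ∧ Vᵀ * V = 1 ∧ V * Vᵀ = 1 ∧
      C = U * Matrix.diagonal (singVals C) * Vᵀ := by
  classical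
  have hH := Matrix.isHermitian_conjTranspose_mul_self C
  set evs : Fin n → ℝ := hH.eigenvalues with hevs
  set V : Matrix (Fin n) (Fin n) ℝ := (hH.eigenvectorUnitary : Matrix (Fin n) (Fin n) ℝ) with hVdef
  have hsV : star V * V = 1 := Unitary.coe_star_mul_self hH.eigenvectorUnitary
  have hVt : Vᵀ * V = 1 := by
    simpa [Matrix.star_eq_conjTranspose, Matrix.conjTranspose_eq_transpose_of_trivial] using hsV
  have hVVt : V * Vᵀ = 1 := mul_eq_one_comm.mp hVt
  have hofReal : (RCLike.ofReal ∘ evs : Fin n → ℝ) = evs := by ext x; simp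
  have hspec : Cᴴ * C = V * Matrix.diagonal evs * Vᵀ := by
    have := hH.spectral_theorem
    simp only [hofReal, Matrix.star_eq_conjTranspose,
      Matrix.conjTranspose_eq_transpose_of_trivial] at this
    exact this
  have hCt : Cᴴ = Cᵀ := Matrix.conjTranspose_eq_transpose_of_trivial C
  set CV : Matrix (Fin n) (Fin n) ℝ := C * V with hCVdef
  have hkey : CVᵀ * CV = Matrix.diagonal evs := by
    have h1 : CVᵀ * CV = Vᵀ * (Cᵀ * C) * V := by
      rw [hCVdef, Matrix.transpose_mul]; simp only [Matrix.mul_assoc]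
    rw [h1, ← hCt, hspec]
    have : Vᵀ * (V * Matrix.diagonal evs * Vᵀ) * V
        = (Vᵀ * V) * Matrix.diagonal evs * (Vᵀ * V) := by
      simp only [Matrix.mul_assoc]
    rw [this, hVt, one_mul, mul_one]
  have hip : ∀ i j, (∑ k, CV k i * CV k j) = Matrix.diagonal evs i j := by
    intro i j
    have := congr_fun (congr_fun hkey i) j
    simpa [Matrix.mul_apply, Matrix.transpose_apply] using this
  have hsv : ∀ i, singVals C i = Real.sqrt (evs i) := fun i => rfl
  have hevnn : ∀ i, 0 ≤ evs i := fun i =>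
    Matrix.eigenvalues_conjTranspose_mul_self_nonneg C i
  have hsq : ∀ i, evs i = (singVals C i) ^ 2 := by
    intro i; rw [hsv i, Real.sq_sqrt (hevnn i)]
  set s : Set (Fin n) := {i | singVals C i ≠ 0} with hs
  set u : Fin n → EuclideanSpace ℝ (Fin n) :=
    fun i => WithLp.toLp 2 (fun k => (singVals C i)⁻¹ * CV k i) with hu
  have hinner : ∀ x y : EuclideanSpace ℝ (Fin n), (inner ℝ x y : ℝ) = ∑ k, x k * y k := by
    intro x y; simp [PiLp.inner_apply, RCLike.inner_apply, conj_trivial]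
    exact Finset.sum_congr rfl fun k _ => mul_comm _ _
  have hon : Orthonormal ℝ (s.restrict u) := by
    rw [orthonormal_iff_ite]
    rintro ⟨i, hi⟩ ⟨j, hj⟩
    have : (inner ℝ (u i) (u j) : ℝ)
        = (singVals C i)⁻¹ * (singVals C j)⁻¹ * ∑ k, CV k i * CV k j := by
      rw [hinner, Finset.mul_sum]
      exact Finset.sum_congr rfl fun k _ => by simp [hu]; ring
    by_cases hij : i = j
    · subst hij
      change inner ℝ (u i) (u i) = _
      simp only [Set.restrict_apply, this, hip, Matrix.diagonal_apply_eq]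
      rw [hsq i]
      have hne : singVals C i ≠ 0 := hi
      simp [Subtype.ext_iff]
      field_simp
    · have : (inner ℝ (u i) (u j) : ℝ) = 0 := by
        rw [this, hip, Matrix.diagonal_apply_ne _ hij, mul_zero]
      change inner ℝ (u i) (u j) = _
      simp only [Set.restrict_apply, this]
      simp [Subtype.ext_iff, hij]
  obtain ⟨b, hb⟩ := hon.exists_orthonormalBasis_extension_of_card_eq
    (by simp [finrank_euclideanSpace_fin])
  set U : Matrix (Fin n) (Fin n) ℝ := fun k i => b i k with hU
  have hUt : Uᵀ * U = 1 := by
    ext i j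
    have := orthonormal_iff_ite.mp b.orthonormal i j
    rw [hinner] at this
    rw [Matrix.mul_apply]; simp only [Matrix.transpose_apply]; simpa [ Matrix.one_apply, hU] using this
  have hCU : C * V = U * Matrix.diagonal (singVals C) := by
    ext k i
    rw [Matrix.mul_diagonal]
    show CV k i = U k i * singVals C i
    by_cases hi : singVals C i = 0
    · have h0 : (∑ m, CV m i * CV m i) = 0 := by
        rw [hip, Matrix.diagonal_apply_eq, hsq, hi]; ring
      have : CV k i * CV k i = 0 :=
        (Finset.sum_eq_zero_iff_of_nonneg (fun m _ => mul_self_nonneg (CV m i))).mp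
          h0 k (Finset.mem_univ k)
      rw [hi, mul_zero]
      exact mul_self_eq_zero.mp this
    · have hbi : b i = u i := hb i hi
      have : U k i = (singVals C i)⁻¹ * CV k i := by
        rw [hU]; show b i k = _; rw [hbi]
      rw [this]; field_simp
  refine ⟨U, V, hUt, mul_eq_one_comm.mp hUt, hVt, hVVt, ?_⟩
  rw [← hCU, Matrix.mul_assoc, hVVt, mul_one]

lemma ptwise (σ p q a b : ℝ) (hp0 : 0 ≤ p) (hp : p ≤ σ) (hq0 : 0 ≤ q) (hq : q ≤ σ) :
    0 ≤ 2*(p*q*(a*b)) + q*(2*σ - q)*a^2 + p*(2*σ - p)*b^2 := by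
  nlinarith [mul_nonneg (mul_nonneg hp0 hq0) (sq_nonneg (a+b)),
    mul_nonneg (mul_nonneg hq0 (by linarith : (0:ℝ) ≤ 2*σ - q - p)) (sq_nonneg a),
    mul_nonneg (mul_nonneg hp0 (by linarith : (0:ℝ) ≤ 2*σ - p - q)) (sq_nonneg b)]

lemma sum_col_expand {n : ℕ} (W : Matrix (Fin n) (Fin n) ℝ)
    (hcol : ∀ j, ∑ i, W i j * W i j = 1) (j : Fin n) :
    ∑ i, ((if i = j then (1:ℝ) else 0) - W i j)^2 = 2 - 2 * W j j := by
  have h : ∀ i : Fin n, ((if i = j then (1:ℝ) else 0) - W i j)^2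
      = (if i = j then 1 - 2 * W i j else 0) + W i j * W i j := by
    intro i; by_cases h : i = j <;> simp [h] <;> ring
  rw [Finset.sum_congr rfl fun i _ => h i, Finset.sum_add_distrib,
    Finset.sum_ite_eq' Finset.univ j _, hcol j]
  simp; ring

lemma core_ineq {n : ℕ} (W : Matrix (Fin n) (Fin n) ℝ) (σs : Fin n → ℝ) (σ : ℝ)
    (hcol : ∀ j, ∑ i, W i j * W i j = 1)
    (hrow : ∀ i, ∑ j, W i j * W i j = 1)
    (h0 : ∀ i, 0 ≤ σs i) (hle : ∀ i, σs i ≤ σ) :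
    ∑ i, ∑ j, (σs i * W i j - σs j * W j i)^2
      ≤ 8 * σ * ((∑ i, σs i) - ∑ i, σs i * W i i) := by
  classical
  set r : Fin n → Fin n → ℝ := fun i j => (if i = j then (1:ℝ) else 0) - W i j with hr
  set P : ℝ := ∑ i, ∑ j, σs i * σs j * (W i j * W j i) with hP
  -- Step 1: expansion of the skew sum
  have step1 : ∑ i, ∑ j, (σs i * W i j - σs j * W j i)^2
      = 2 * ((∑ i, (σs i)^2) - P) := by
    have expand : ∀ i j : Fin n, (σs i * W i j - σs j * W j i)^2
        = (σs i)^2*(W i j*W i j) + (σs j)^2*(W j i*W j i)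
          - 2*(σs i*σs j*(W i j*W j i)) := fun i j => by ring
    have e1 : ∑ i, ∑ j, (σs i)^2*(W i j*W i j) = ∑ i, (σs i)^2 := by
      refine Finset.sum_congr rfl fun i _ => ?_
      rw [← Finset.mul_sum, hrow i, mul_one]
    have e2 : ∑ i : Fin n, ∑ j : Fin n, (σs j)^2*(W j i*W j i) = ∑ i, (σs i)^2 := by
      rw [Finset.sum_comm]
      refine Finset.sum_congr rfl fun i _ => ?_
      rw [← Finset.mul_sum, hrow i, mul_one]
    have e3 : ∑ i : Fin n, ∑ j : Fin n, 2*(σs i*σs j*(W i j*W j i)) = 2 * P := by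
      rw [hP, Finset.mul_sum]
      refine Finset.sum_congr rfl fun i _ => ?_
      rw [Finset.mul_sum]
    calc ∑ i, ∑ j, (σs i * W i j - σs j * W j i)^2
        = ∑ i : Fin n, ∑ j : Fin n, ((σs i)^2*(W i j*W i j) + (σs j)^2*(W j i*W j i)
            - 2*(σs i*σs j*(W i j*W j i))) := by
          exact Finset.sum_congr rfl fun i _ => Finset.sum_congr rfl fun j _ => expand i j
      _ = (∑ i : Fin n, ∑ j : Fin n, (σs i)^2*(W i j*W i j))
            + (∑ i : Fin n, ∑ j : Fin n, (σs j)^2*(W j i*W j i))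
            - ∑ i : Fin n, ∑ j : Fin n, 2*(σs i*σs j*(W i j*W j i)) := by
          simp [Finset.sum_add_distrib, Finset.sum_sub_distrib]
      _ = 2 * ((∑ i, (σs i)^2) - P) := by rw [e1, e2, e3]; ring
  -- Step 2: the positivity part
  set T1 : ℝ := ∑ i, ∑ j, σs i * σs j * (r i j * r j i) with hT1
  set T2 : ℝ := ∑ i, ∑ j, σs j * (2*σ - σs j) * (r i j)^2 with hT2
  have hT2' : T2 = ∑ i, ∑ j, σs i * (2*σ - σs i) * (r j i)^2 := hT2.trans Finset.sum_comm
  have hnonneg : 0 ≤ T1 + T2 := by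
    have hbig : (0:ℝ) ≤ ∑ i, ∑ j, (2*(σs i * σs j * (r i j * r j i))
        + σs j * (2*σ - σs j) * (r i j)^2 + σs i * (2*σ - σs i) * (r j i)^2) := by
      refine Finset.sum_nonneg fun i _ => Finset.sum_nonneg fun j _ => ?_
      exact ptwise σ (σs i) (σs j) (r i j) (r j i) (h0 i) (hle i) (h0 j) (hle j)
    have c1 : ∑ i : Fin n, ∑ j : Fin n, 2*(σs i * σs j * (r i j * r j i)) = 2*T1 := by
      rw [hT1, Finset.mul_sum]
      exact Finset.sum_congr rfl fun i _ => by rw [Finset.mul_sum]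
    have hbig2 : ∑ i, ∑ j, (2*(σs i * σs j * (r i j * r j i))
        + σs j * (2*σ - σs j) * (r i j)^2 + σs i * (2*σ - σs i) * (r j i)^2)
        = 2*T1 + T2 + T2 := by
      simp only [Finset.sum_add_distrib]
      rw [c1, ← hT2, ← hT2']
    rw [hbig2] at hbig
    linarith
  -- Step 3: identities for T1 and T2
  have hT1eq : T1 = (∑ i, (σs i)^2 * (1 - 2 * W i i)) + P := by
    have expand : ∀ i j : Fin n, σs i * σs j * (r i j * r j i)
        = (if i = j then (σs i)^2 * (1 - 2*W i i) else 0)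
          + σs i * σs j * (W i j * W j i) := by
      intro i j
      by_cases h : i = j
      · subst h; simp only [hr, eq_self_iff_true, if_true]; ring
      · simp only [hr, if_neg h, if_neg (Ne.symm h)]; ring
    rw [hT1]
    calc ∑ i, ∑ j, σs i * σs j * (r i j * r j i)
        = ∑ i : Fin n, ∑ j : Fin n, ((if i = j then (σs i)^2 * (1 - 2*W i i) else 0)
            + σs i * σs j * (W i j * W j i)) :=
          Finset.sum_congr rfl fun i _ => Finset.sum_congr rfl fun j _ => expand i j
      _ = (∑ i, (σs i)^2 * (1 - 2 * W i i)) + P := by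
          rw [hP]
          simp [Finset.sum_add_distrib, Finset.sum_ite_eq Finset.univ]
  have hT2eq : T2 = ∑ j, σs j * (2*σ - σs j) * (2 - 2 * W j j) := by
    rw [hT2, Finset.sum_comm]
    refine Finset.sum_congr rfl fun j _ => ?_
    rw [← Finset.mul_sum]
    rw [show (∑ i, (r i j)^2) = 2 - 2 * W j j from sum_col_expand W hcol j]
  -- combine
  have hsum : T1 + T2 = 4*σ*((∑ i, σs i) - ∑ i, σs i * W i i) - ((∑ i, (σs i)^2) - P) := by
    rw [hT1eq, hT2eq]
    have : (∑ i, (σs i)^2 * (1 - 2 * W i i)) + (∑ j, σs j * (2*σ - σs j) * (2 - 2 * W j j))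
        = ∑ i, ((σs i)^2 * (1 - 2 * W i i) + σs i * (2*σ - σs i) * (2 - 2 * W i i)) := by
      rw [Finset.sum_add_distrib]
    rw [add_right_comm, this]
    have : ∑ i, ((σs i)^2 * (1 - 2 * W i i) + σs i * (2*σ - σs i) * (2 - 2 * W i i))
        = ∑ i, (4*σ*(σs i - σs i * W i i) - (σs i)^2) := by
      exact Finset.sum_congr rfl fun i _ => by ring
    rw [this]
    simp [Finset.sum_sub_distrib, Finset.mul_sum, mul_sub]
    ring
  have : (∑ i, (σs i)^2) - P ≤ 4*σ*((∑ i, σs i) - ∑ i, σs i * W i i) := by linarith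
  linarith [step1, this]

lemma frob_sq {n : ℕ} (A : Matrix (Fin n) (Fin n) ℝ) :
    frobNorm A ^ 2 = ∑ i, ∑ j, (A i j)^2 := by
  rw [frobNorm, Real.sq_sqrt]
  positivity

lemma frob_sq_trace {n : ℕ} (A : Matrix (Fin n) (Fin n) ℝ) :
    frobNorm A ^ 2 = (Aᵀ * A).trace := by
  rw [frob_sq]
  simp only [Matrix.trace, Matrix.diag, Matrix.mul_apply, Matrix.transpose_apply, sq]
  exact Finset.sum_comm

lemma frob_sq_neg {n : ℕ} (A : Matrix (Fin n) (Fin n) ℝ) :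
    frobNorm (-A) ^ 2 = frobNorm A ^ 2 := by
  rw [frob_sq, frob_sq]
  simp [Matrix.neg_apply, neg_sq]

lemma skew_conj {n : ℕ} (U N : Matrix (Fin n) (Fin n) ℝ) :
    skewPart (U * N * Uᵀ) = U * skewPart N * Uᵀ := by
  unfold skewPart
  rw [Matrix.transpose_mul, Matrix.transpose_mul, Matrix.transpose_transpose]
  simp only [Matrix.mul_smul, Matrix.smul_mul, Matrix.mul_sub, Matrix.sub_mul, Matrix.mul_assoc]

lemma frob_conj {n : ℕ} (U A : Matrix (Fin n) (Fin n) ℝ) (hUt : Uᵀ * U = 1) :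
    frobNorm (U * A * Uᵀ) ^ 2 = frobNorm A ^ 2 := by
  rw [frob_sq_trace, frob_sq_trace]
  have h1 : Uᵀ * (U * (A * Uᵀ)) = A * Uᵀ := by rw [← Matrix.mul_assoc, hUt, one_mul]
  have h2 : (U * A * Uᵀ)ᵀ * (U * A * Uᵀ) = U * (Aᵀ * (A * Uᵀ)) := by
    calc (U * A * Uᵀ)ᵀ * (U * A * Uᵀ)
        = U * (Aᵀ * (Uᵀ * (U * (A * Uᵀ)))) := by
          simp only [Matrix.transpose_mul, Matrix.transpose_transpose, Matrix.mul_assoc]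
      _ = U * (Aᵀ * (A * Uᵀ)) := by rw [h1]
  have h4 : Aᵀ * (A * Uᵀ) * U = Aᵀ * A := by
    simp only [Matrix.mul_assoc]
    rw [hUt, Matrix.mul_one]
  rw [h2, Matrix.trace_mul_comm, h4]

/-- gradient-gap inequality. `∑ singVals C` is the sum of the
singular values of `C`, i.e. the maximum of `Tr(CX)` over `O(n)`. -/
theorem procrustes_gradient_gap {n : ℕ}
    (C : Matrix (Fin n) (Fin n) ℝ) (hC : C ≠ 0) :
    ∀ X : Matrix (Fin n) (Fin n) ℝ, Xᵀ * X = 1 →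
      (∑ i, singVals C i) - (C * X).trace ≥
        (1 / (2 * sigmaMax C)) * frobNorm (skewPart (Xᵀ * Cᵀ)) ^ 2 := by
  intro X hX
  obtain ⟨U, V, hUt, hUUt, hVt, hVVt, hsvd⟩ := exists_svd C
  have h0 : ∀ i, 0 ≤ singVals C i := fun i => Real.sqrt_nonneg _
  have hle : ∀ i, singVals C i ≤ sigmaMax C := fun i =>
    le_ciSup (Set.Finite.bddAbove (Set.finite_range (singVals C))) i
  have hσpos : 0 < sigmaMax C := by
    rcases lt_or_ge 0 (sigmaMax C) with h | h
    · exact h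
    · exfalso; apply hC
      have hz : ∀ i, singVals C i = 0 := fun i => le_antisymm (le_trans (hle i) h) (h0 i)
      have hdz : Matrix.diagonal (singVals C) = 0 := by
        ext i j
        by_cases hij : i = j <;> simp [Matrix.diagonal_apply, hij, hz]
      rw [hsvd, hdz, Matrix.mul_zero, Matrix.zero_mul]
  set W : Matrix (Fin n) (Fin n) ℝ := Vᵀ * X * U with hW
  have hXXt : X * Xᵀ = 1 := mul_eq_one_comm.mp hX
  have e1 : V * (Vᵀ * (X * U)) = X * U := by rw [← Matrix.mul_assoc, hVVt, one_mul]
  have e2 : Xᵀ * (X * U) = U := by rw [← Matrix.mul_assoc, hX, one_mul]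
  have hWt : Wᵀ * W = 1 := by
    calc Wᵀ * W
        = Uᵀ * (Xᵀ * (V * (Vᵀ * (X * U)))) := by
          rw [hW]
          simp only [Matrix.transpose_mul, Matrix.transpose_transpose, Matrix.mul_assoc]
      _ = Uᵀ * (Xᵀ * (X * U)) := by rw [e1]
      _ = Uᵀ * U := by rw [e2]
      _ = 1 := hUt
  have hWWt : W * Wᵀ = 1 := mul_eq_one_comm.mp hWt
  have hcol : ∀ j, ∑ i, W i j * W i j = 1 := by
    intro j
    have := congr_fun (congr_fun hWt j) j
    simpa [Matrix.mul_apply, Matrix.transpose_apply, Matrix.one_apply] using this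
  have hrow : ∀ i, ∑ j, W i j * W i j = 1 := by
    intro i
    have := congr_fun (congr_fun hWWt i) i
    simpa [Matrix.mul_apply, Matrix.transpose_apply, Matrix.one_apply] using this
  have hCX : U * (Matrix.diagonal (singVals C) * W) * Uᵀ = C * X := by
    conv_rhs => rw [hsvd]
    rw [hW]
    calc U * (Matrix.diagonal (singVals C) * (Vᵀ * X * U)) * Uᵀ
        = U * Matrix.diagonal (singVals C) * Vᵀ * X * (U * Uᵀ) := by
          simp only [Matrix.mul_assoc]
      _ = U * Matrix.diagonal (singVals C) * Vᵀ * X := by rw [hUUt, Matrix.mul_one]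
  have htr : (C * X).trace = ∑ i, singVals C i * W i i := by
    rw [← hCX, Matrix.trace_mul_cycle, hUt, one_mul]
    simp [Matrix.trace, Matrix.diag, Matrix.diagonal_mul]
  have hentry : ∀ i j, skewPart (Matrix.diagonal (singVals C) * W) i j
      = (1/2) * (singVals C i * W i j - singVals C j * W j i) := by
    intro i j
    simp [skewPart, Matrix.sub_apply, Matrix.transpose_apply, Matrix.smul_apply,
      Matrix.diagonal_mul, smul_eq_mul]
    ring
  have hsk : frobNorm (skewPart (Xᵀ * Cᵀ)) ^ 2
      = (1/4) * ∑ i, ∑ j, (singVals C i * W i j - singVals C j * W j i)^2 := by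
    have h1 : Xᵀ * Cᵀ = (C * X)ᵀ := (Matrix.transpose_mul C X).symm
    have h2 : skewPart ((C * X)ᵀ) = -(skewPart (C * X)) := by
      unfold skewPart
      rw [Matrix.transpose_transpose,
        show (C * X)ᵀ - C * X = -(C * X - (C * X)ᵀ) from (neg_sub _ _).symm, smul_neg]
    calc frobNorm (skewPart (Xᵀ * Cᵀ)) ^ 2
        = frobNorm (skewPart (C * X)) ^ 2 := by rw [h1, h2]; exact frob_sq_neg _
      _ = frobNorm (skewPart (Matrix.diagonal (singVals C) * W)) ^ 2 := by
          rw [← hCX, skew_conj, frob_conj _ _ hUt]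
      _ = ∑ i, ∑ j, ((1/2) * (singVals C i * W i j - singVals C j * W j i))^2 := by
          rw [frob_sq]
          exact Finset.sum_congr rfl fun i _ => Finset.sum_congr rfl fun j _ => by
            rw [hentry i j]
      _ = (1/4) * ∑ i, ∑ j, (singVals C i * W i j - singVals C j * W j i)^2 := by
          rw [Finset.mul_sum]
          refine Finset.sum_congr rfl fun i _ => ?_
          rw [Finset.mul_sum]
          exact Finset.sum_congr rfl fun j _ => by ring
  have hcore := core_ineq W (singVals C) (sigmaMax C) hcol hrow h0 hle
  rw [htr, hsk, ge_iff_le]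
  set S : ℝ := ∑ i, ∑ j, (singVals C i * W i j - singVals C j * W j i)^2 with hS
  set G : ℝ := (∑ i, singVals C i) - ∑ i, singVals C i * W i i with hG
  have key : (1/(2 * sigmaMax C)) * ((1/4) * S) ≤ (1/(2 * sigmaMax C)) * ((1/4) * (8 * sigmaMax C * G)) := by
    apply mul_le_mul_of_nonneg_left _ (by positivity)
    apply mul_le_mul_of_nonneg_left hcore (by norm_num)
  have hid : (1/(2 * sigmaMax C)) * ((1/4) * (8 * sigmaMax C * G)) = G := by
    field_simp
    ring
  linarith
end
end

section
/- (Solution of the orthogonal Procrustes problem) Let C be a real n×n matrix with singular value decomposition C = UΣVᵀ (U, V orthogonal, Σ diagonal with nonnegative entries). Then for every X ∈ O(n), Tr(C X) ≤ Tr(Σ), and equality holds for X = VUᵀ. Consequently X_* := VUᵀ is a global minimizer of f(X) := −Tr(CX) over O(n), with minimum value f_* = −Tr(Σ), the negative of the sum of the singular values of C. -/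
open Matrix

/-- solution of the orthogonal Procrustes problem. If
`C = U S Vᵀ` is an SVD, then `Tr(CX) ≤ Tr(S)` for all orthogonal `X`, with
equality at `X = V Uᵀ`. -/
theorem procrustes_solution {n : ℕ}
    (C U S V : Matrix (Fin n) (Fin n) ℝ)
    (hU : Uᵀ * U = 1) (hV : Vᵀ * V = 1)
    (hSdiag : S.IsDiag) (hSnn : ∀ i, 0 ≤ S i i)
    (hSVD : C = U * S * Vᵀ) :
    (∀ X : Matrix (Fin n) (Fin n) ℝ, Xᵀ * X = 1 → (C * X).trace ≤ S.trace) ∧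
      (C * (V * Uᵀ)).trace = S.trace := by
  constructor
  · intro X hX
    set W := Vᵀ * X * U with hW
    have hWorth : Wᵀ * W = 1 := by
      have hVV : V * Vᵀ = 1 := mul_eq_one_comm.mp hV
      have hXX : X * Xᵀ = 1 := mul_eq_one_comm.mp hX
      simp only [hW, Matrix.transpose_mul, Matrix.transpose_transpose]
      calc (Uᵀ * (Xᵀ * V)) * (Vᵀ * X * U)
          = Uᵀ * ((Xᵀ * (V * Vᵀ)) * X) * U := by noncomm_ring
        _ = 1 := by rw [hVV, Matrix.mul_one, hX, Matrix.mul_one, hU]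
    have hdiag : ∀ i, W i i ≤ 1 := by
      intro i
      have h1 : (Wᵀ * W) i i = 1 := by rw [hWorth]; simp
      have h2 : ∑ k, W k i ^ 2 = 1 := by
        rw [← h1]; simp [Matrix.mul_apply, sq]
      have hle : W i i ^ 2 ≤ 1 := by
        rw [← h2]
        exact Finset.single_le_sum (fun k _ => sq_nonneg (W k i)) (Finset.mem_univ i)
      nlinarith [sq_nonneg (W i i - 1)]
    have htr : (C * X).trace = (S * W).trace := by
      have h3 : U * S * Vᵀ * X = U * (S * Vᵀ * X) := by noncomm_ring
      rw [hSVD, h3, Matrix.trace_mul_comm, hW]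
      congr 1
      noncomm_ring
    rw [htr]
    have hSW : (S * W).trace = ∑ i, S i i * W i i := by
      simp only [Matrix.trace, Matrix.diag, Matrix.mul_apply]
      refine Finset.sum_congr rfl fun i _ => ?_
      rw [Finset.sum_eq_single i]
      · intro b _ hb; rw [hSdiag hb.symm, zero_mul]
      · simp
    rw [hSW, Matrix.trace]
    refine Finset.sum_le_sum fun i _ => ?_
    calc S i i * W i i ≤ S i i * 1 := mul_le_mul_of_nonneg_left (hdiag i) (hSnn i)
      _ = S i i := mul_one _
  · have hVV : V * Vᵀ = 1 := mul_eq_one_comm.mp hV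
    have hUU : U * Uᵀ = 1 := mul_eq_one_comm.mp hU
    rw [hSVD]
    have : U * S * Vᵀ * (V * Uᵀ) = U * S * Uᵀ := by
      calc U * S * Vᵀ * (V * Uᵀ) = U * S * (Vᵀ * V) * Uᵀ := by noncomm_ring
        _ = U * S * Uᵀ := by rw [hV, Matrix.mul_one]
    rw [this, Matrix.trace_mul_cycle, hU, Matrix.one_mul]
end
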